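/- arXiv:1503.01752 — 4 statements merged into one kernel-verified Lean document; each statement's English description precedes it below -/
import Mathlib

section
/- Let Σ be the diagonal matrix of leverage scores of √Z A and M the entrywise square of the projection matrix P = √Z A(AᵀZA)^{-1}Aᵀ√Z. Then 0 ⪯ Σ − M ⪯ Σ in the positive semidefinite order; in particular Σ − M is diagonally dominant with nonnegative diagonal. -/
open Matrix

lemma mulVec_inj_of_rank {n d : ℕ} (A : Matrix (Fin n) (Fin d) ℝ) (hA : A.rank = d) :
    Function.Injective A.mulVec := by
  have h := LinearMap.finrank_range_add_finrank_ker A.mulVecLin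
  rw [Matrix.rank] at hA
  rw [hA, Module.finrank_fin_fun] at h
  have hker : Module.finrank ℝ (LinearMap.ker A.mulVecLin) = 0 := by omega
  have hbot : LinearMap.ker A.mulVecLin = ⊥ := Submodule.finrank_eq_zero.mp hker
  have := LinearMap.ker_eq_bot.mp hbot
  exact this
lemma proj_pair_psd {n : ℕ} (P : Matrix (Fin n) (Fin n) ℝ) (hsym : Pᵀ = P)
    (hid : P * P = P) (hps : P.PosSemidef) :
    (Matrix.diagonal (fun i => P i i) - Matrix.of (fun i j => (P i j) ^ 2)).PosSemidef ∧
    (Matrix.of (fun i j => (P i j) ^ 2) : Matrix (Fin n) (Fin n) ℝ).PosSemidef := by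
  have hsym' : ∀ i j, P j i = P i j := fun i j => by
    nth_rewrite 1 [← hsym]; exact Matrix.transpose_apply _ _ _
  have hPmul : ∀ i j, P i j = ∑ k, P i k * P k j := fun i j => by
    conv_lhs => rw [← hid]
    simp [Matrix.mul_apply]
  have hdiag : ∀ i, P i i = ∑ j, (P i j) ^ 2 := fun i => by
    rw [hPmul i i]
    exact Finset.sum_congr rfl fun j _ => by rw [hsym' i j]; ring
  have hMpsd : (Matrix.of (fun i j => (P i j) ^ 2) : Matrix (Fin n) (Fin n) ℝ).PosSemidef := by
    refine Matrix.posSemidef_iff_dotProduct_mulVec.mpr ⟨?_, ?_⟩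
    · ext i j
      simp only [Matrix.conjTranspose_apply, star_trivial, Matrix.of_apply, hsym' i j]
    · intro x
      simp only [star_trivial]
      have key : x ⬝ᵥ (Matrix.of (fun i j => (P i j) ^ 2) : Matrix (Fin n) (Fin n) ℝ) *ᵥ x
          = ∑ k, (star (fun i => x i * P i k)) ⬝ᵥ P *ᵥ (fun i => x i * P i k) := by
        simp only [dotProduct, mulVec, star_trivial, Matrix.of_apply]
        have hterm : ∀ i j : Fin n, x i * ((P i j) ^ 2 * x j)
            = ∑ k, (x i * P i k) * (P i j * (x j * P j k)) := by
          intro i j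
          have e : ∑ k, (x i * P i k) * (P i j * (x j * P j k))
              = (∑ k, P i k * P k j) * (P i j * (x i * x j)) := by
            rw [Finset.sum_mul]
            exact Finset.sum_congr rfl fun k _ => by rw [hsym' k j]; ring
          rw [e, ← hPmul i j]; ring
        have lhs_eq : ∑ i, x i * ∑ j, (P i j) ^ 2 * x j
            = ∑ i, ∑ j, ∑ k, (x i * P i k) * (P i j * (x j * P j k)) := by
          refine Finset.sum_congr rfl fun i _ => ?_
          rw [Finset.mul_sum]
          exact Finset.sum_congr rfl fun j _ => hterm i j
        rw [lhs_eq]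
        calc ∑ i, ∑ j, ∑ k, (x i * P i k) * (P i j * (x j * P j k))
            = ∑ i, ∑ k, ∑ j, (x i * P i k) * (P i j * (x j * P j k)) :=
              Finset.sum_congr rfl fun i _ => Finset.sum_comm
          _ = ∑ k, ∑ i, ∑ j, (x i * P i k) * (P i j * (x j * P j k)) := Finset.sum_comm
          _ = ∑ k, ∑ i, (x i * P i k) * ∑ j, P i j * (x j * P j k) := by
              refine Finset.sum_congr rfl fun k _ => Finset.sum_congr rfl fun i _ => ?_
              rw [Finset.mul_sum]
      rw [key]
      exact Finset.sum_nonneg fun k _ => hps.dotProduct_mulVec_nonneg _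
  refine ⟨Matrix.posSemidef_iff_dotProduct_mulVec.mpr ⟨?_, ?_⟩, hMpsd⟩
  · ext i j
    simp only [Matrix.sub_apply, Matrix.conjTranspose_apply, star_trivial,
      Matrix.diagonal_apply, Matrix.of_apply, hsym' i j]
    by_cases h : i = j <;> simp [h, eq_comm]
  · intro x
    simp only [star_trivial]
    have key : 2 * (x ⬝ᵥ (Matrix.diagonal (fun i => P i i) - Matrix.of (fun i j => (P i j) ^ 2)) *ᵥ x)
        = ∑ i, ∑ j, (P i j) ^ 2 * (x i - x j) ^ 2 := by
      have swap : ∑ i, ∑ j, (P i j) ^ 2 * (x j) ^ 2 = ∑ i, ∑ j, (P i j) ^ 2 * (x i) ^ 2 := by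
        rw [Finset.sum_comm]
        exact Finset.sum_congr rfl fun i _ => Finset.sum_congr rfl fun j _ => by rw [hsym' i j]
      have expand : 2 * (x ⬝ᵥ (Matrix.diagonal (fun i => P i i) - Matrix.of (fun i j => (P i j) ^ 2)) *ᵥ x)
          = (∑ i, ∑ j, 2 * ((P i j) ^ 2 * (x i) ^ 2)) - ∑ i, ∑ j, 2 * ((P i j) ^ 2 * (x i * x j)) := by
        simp only [dotProduct, mulVec, Matrix.sub_apply, Matrix.diagonal_apply, Matrix.of_apply,
          sub_mul, Finset.sum_sub_distrib, mul_sub, ite_mul, zero_mul, Finset.sum_ite_eq,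
          Finset.mem_univ, if_true]
        rw [Finset.mul_sum, Finset.mul_sum]
        congr 1
        · refine Finset.sum_congr rfl fun i _ => ?_
          rw [hdiag i, Finset.sum_mul, Finset.mul_sum, Finset.mul_sum]
          exact Finset.sum_congr rfl fun j _ => by ring
        · refine Finset.sum_congr rfl fun i _ => ?_
          rw [Finset.mul_sum, Finset.mul_sum]
          exact Finset.sum_congr rfl fun j _ => by ring
      rw [expand]
      have hterm : ∀ i j : Fin n, (P i j) ^ 2 * (x i - x j) ^ 2
          = (P i j) ^ 2 * (x i) ^ 2 + (P i j) ^ 2 * (x j) ^ 2 - 2 * ((P i j) ^ 2 * (x i * x j)) := by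
        intro i j; ring
      simp only [hterm, Finset.sum_sub_distrib, Finset.sum_add_distrib, swap]
      congr 1
      rw [← Finset.sum_add_distrib]
      refine Finset.sum_congr rfl fun i _ => ?_
      rw [← Finset.sum_add_distrib]
      exact Finset.sum_congr rfl fun j _ => by ring
    have h2 : (0:ℝ) ≤ 2 * (x ⬝ᵥ (Matrix.diagonal (fun i => P i i) - Matrix.of (fun i j => (P i j) ^ 2)) *ᵥ x) := by
      rw [key]
      exact Finset.sum_nonneg fun i _ => Finset.sum_nonneg fun j _ =>
        mul_nonneg (sq_nonneg _) (sq_nonneg _)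
    linarith

lemma proj_BGB {n d : ℕ} (B : Matrix (Fin n) (Fin d) ℝ) (G : Matrix (Fin d) (Fin d) ℝ)
    (hG : G = Bᵀ * B) (hGdet : IsUnit G.det) (hGinvT : G⁻¹ᵀ = G⁻¹)
    (hGinvPSD : G⁻¹.PosSemidef) :
    (B * G⁻¹ * Bᵀ)ᵀ = B * G⁻¹ * Bᵀ ∧
    (B * G⁻¹ * Bᵀ) * (B * G⁻¹ * Bᵀ) = B * G⁻¹ * Bᵀ ∧
    (B * G⁻¹ * Bᵀ).PosSemidef := by
  refine ⟨?_, ?_, ?_⟩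
  · rw [Matrix.transpose_mul, Matrix.transpose_mul, Matrix.transpose_transpose, hGinvT,
      Matrix.mul_assoc]
  · calc (B * G⁻¹ * Bᵀ) * (B * G⁻¹ * Bᵀ)
        = B * G⁻¹ * (Bᵀ * B) * (G⁻¹ * Bᵀ) := by simp only [Matrix.mul_assoc]
      _ = B * (G⁻¹ * G * (G⁻¹ * Bᵀ)) := by rw [← hG]; simp only [Matrix.mul_assoc]
      _ = B * G⁻¹ * Bᵀ := by
          rw [Matrix.nonsing_inv_mul G hGdet, Matrix.one_mul, Matrix.mul_assoc]
  · have hBHT : Bᴴ = Bᵀ := by ext i j; simp [Matrix.conjTranspose_apply]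
    rw [← hBHT]
    exact hGinvPSD.mul_mul_conjTranspose_same B

lemma leverage_aux {n d : ℕ} (A : Matrix (Fin n) (Fin d) ℝ)
    (z : Fin n → ℝ) (hz : ∀ i, 0 < z i) (hA : A.rank = d) :
    (Matrix.diagonal (fun i =>
        (Matrix.diagonal (fun i => Real.sqrt (z i)) * A * (Aᵀ * Matrix.diagonal z * A)⁻¹ * Aᵀ *
          Matrix.diagonal (fun i => Real.sqrt (z i))) i i) -
      Matrix.of (fun i j =>
        ((Matrix.diagonal (fun i => Real.sqrt (z i)) * A * (Aᵀ * Matrix.diagonal z * A)⁻¹ * Aᵀ *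
          Matrix.diagonal (fun i => Real.sqrt (z i))) i j) ^ 2)).PosSemidef ∧
    (Matrix.of (fun i j =>
        ((Matrix.diagonal (fun i => Real.sqrt (z i)) * A * (Aᵀ * Matrix.diagonal z * A)⁻¹ * Aᵀ *
          Matrix.diagonal (fun i => Real.sqrt (z i))) i j) ^ 2) :
      Matrix (Fin n) (Fin n) ℝ).PosSemidef := by
  have hDD : Matrix.diagonal (fun i => Real.sqrt (z i)) * Matrix.diagonal (fun i => Real.sqrt (z i))
      = Matrix.diagonal z := by
    rw [Matrix.diagonal_mul_diagonal]
    have : (fun i => Real.sqrt (z i) * Real.sqrt (z i)) = z :=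
      funext fun i => Real.mul_self_sqrt (hz i).le
    rw [this]
  have hBT : (Matrix.diagonal (fun i => Real.sqrt (z i)) * A)ᵀ
      = Aᵀ * Matrix.diagonal (fun i => Real.sqrt (z i)) := by
    rw [Matrix.transpose_mul, Matrix.diagonal_transpose]
  have hG : Aᵀ * Matrix.diagonal z * A
      = (Matrix.diagonal (fun i => Real.sqrt (z i)) * A)ᵀ *
        (Matrix.diagonal (fun i => Real.sqrt (z i)) * A) := by
    rw [hBT, Matrix.mul_assoc Aᵀ (Matrix.diagonal (fun i => Real.sqrt (z i)))
      ((Matrix.diagonal (fun i => Real.sqrt (z i))) * A),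
      ← Matrix.mul_assoc (Matrix.diagonal (fun i => Real.sqrt (z i)))
      (Matrix.diagonal (fun i => Real.sqrt (z i))) A, hDD, ← Matrix.mul_assoc]
  have hBinj : Function.Injective (Matrix.diagonal (fun i => Real.sqrt (z i)) * A).mulVec := by
    intro x y hxy
    simp only [← Matrix.mulVec_mulVec] at hxy
    have hDinj : Function.Injective (Matrix.diagonal (fun i => Real.sqrt (z i))).mulVec := by
      rw [Matrix.mulVec_injective_iff_isUnit, Matrix.isUnit_iff_isUnit_det, Matrix.det_diagonal]
      exact (Finset.prod_pos fun i _ => Real.sqrt_pos.mpr (hz i)).ne'.isUnit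
    exact mulVec_inj_of_rank A hA (hDinj hxy)
  have hGpd : (Aᵀ * Matrix.diagonal z * A).PosDef := by
    rw [hG]
    set B := Matrix.diagonal (fun i => Real.sqrt (z i)) * A with hB
    refine Matrix.posDef_iff_dotProduct_mulVec.mpr ⟨Matrix.isHermitian_conjTranspose_mul_self B, fun x hx => ?_⟩
    have : star x ⬝ᵥ (Bᵀ * B) *ᵥ x = (B *ᵥ x) ⬝ᵥ (B *ᵥ x) := by
      rw [← Matrix.mulVec_mulVec, Matrix.dotProduct_mulVec, star_trivial,
        Matrix.vecMul_transpose]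
    rw [this]
    have hne : B *ᵥ x ≠ 0 := fun h => hx (hBinj (h.trans (Matrix.mulVec_zero B).symm))
    have hnn : 0 ≤ (B *ᵥ x) ⬝ᵥ (B *ᵥ x) := Finset.sum_nonneg fun i _ => mul_self_nonneg _
    rcases hnn.lt_or_eq with h | h
    · exact h
    · exact absurd (dotProduct_self_eq_zero.mp h.symm) hne
  have hGdet : IsUnit (Aᵀ * Matrix.diagonal z * A).det :=
    (Matrix.isUnit_iff_isUnit_det _).mp hGpd.isUnit
  have hGinvT : ((Aᵀ * Matrix.diagonal z * A)⁻¹)ᵀ = (Aᵀ * Matrix.diagonal z * A)⁻¹ := by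
    rw [Matrix.transpose_nonsing_inv]
    congr 1
    rw [Matrix.transpose_mul, Matrix.transpose_mul, Matrix.transpose_transpose,
      Matrix.diagonal_transpose, Matrix.mul_assoc]
  obtain ⟨hsym, hid, hpsd⟩ := proj_BGB (Matrix.diagonal (fun i => Real.sqrt (z i)) * A)
    (Aᵀ * Matrix.diagonal z * A) hG hGdet hGinvT hGpd.inv.posSemidef
  have hPval : Matrix.diagonal (fun i => Real.sqrt (z i)) * A * (Aᵀ * Matrix.diagonal z * A)⁻¹ *
      Aᵀ * Matrix.diagonal (fun i => Real.sqrt (z i))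
      = Matrix.diagonal (fun i => Real.sqrt (z i)) * A * (Aᵀ * Matrix.diagonal z * A)⁻¹ *
        (Matrix.diagonal (fun i => Real.sqrt (z i)) * A)ᵀ := by
    rw [hBT, ← Matrix.mul_assoc]
  rw [hPval]
  exact proj_pair_psd _ hsym hid hpsd

/-- `0 ⪯ Σ − M ⪯ Σ` for the leverage score diagonal Σ and entrywise square M of the
projection matrix. -/
theorem sigma_minus_M_psd {n d : ℕ} (A : Matrix (Fin n) (Fin d) ℝ)
    (z : Fin n → ℝ) (hz : ∀ i, 0 < z i) (hA : A.rank = d) :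
    letI P : Matrix (Fin n) (Fin n) ℝ :=
      Matrix.diagonal (fun i => Real.sqrt (z i)) * A *
        (Aᵀ * Matrix.diagonal z * A)⁻¹ * Aᵀ *
        Matrix.diagonal (fun i => Real.sqrt (z i))
    letI M : Matrix (Fin n) (Fin n) ℝ := fun i j => (P i j) ^ 2
    letI Sg : Matrix (Fin n) (Fin n) ℝ := Matrix.diagonal (fun i => P i i)
    (Sg - M).PosSemidef ∧ (Sg - (Sg - M)).PosSemidef := by
  obtain ⟨h1, h2⟩ := leverage_aux A z hz hA
  refine ⟨h1, ?_⟩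
  convert h2 using 1
  exact sub_sub_cancel _ _
end

section
/- If x, y ∈ R^n_{>0} satisfy |ln x_i − ln y_i| ≤ ε for all i, then for every i the leverage scores satisfy e^{−2ε} σ_A(y)_i ≤ σ_A(x)_i ≤ e^{2ε} σ_A(y)_i, where σ_A(v)_i = [√V A(AᵀVA)^{-1}Aᵀ√V]_{ii} with V = diag(v). -/
open Matrix Finset

section helpers
variable {n d : ℕ}

lemma quad_sandwich (A : Matrix (Fin n) (Fin d) ℝ) (c : Fin n → ℝ) (z : Fin d → ℝ) :
    z ⬝ᵥ (Aᵀ * Matrix.diagonal c * A) *ᵥ z = ∑ i, c i * (A *ᵥ z) i ^ 2 := by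
  rw [← Matrix.mulVec_mulVec, ← Matrix.mulVec_mulVec, Matrix.dotProduct_mulVec,
    Matrix.vecMul_transpose]
  simp [dotProduct, Matrix.mulVec_diagonal]
  exact Finset.sum_congr rfl fun i _ => by ring

lemma sandwich_herm (A : Matrix (Fin n) (Fin d) ℝ) (c : Fin n → ℝ) :
    (Aᵀ * Matrix.diagonal c * A).IsHermitian := by
  unfold Matrix.IsHermitian
  ext i j
  simp [Matrix.conjTranspose_apply, Matrix.mul_apply, Matrix.diagonal_apply]
  exact Finset.sum_congr rfl fun k _ => by ring

lemma sandwich_psd (A : Matrix (Fin n) (Fin d) ℝ) {c : Fin n → ℝ} (hc : ∀ i, 0 ≤ c i) :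
    (Aᵀ * Matrix.diagonal c * A).PosSemidef := by
  refine .of_dotProduct_mulVec_nonneg (sandwich_herm A c) fun z => ?_
  rw [star_trivial, quad_sandwich]
  exact Finset.sum_nonneg fun i _ => mul_nonneg (hc i) (sq_nonneg _)
end helpers

section helpers2
variable {n d : ℕ}

lemma sandwich_pd (A : Matrix (Fin n) (Fin d) ℝ) (hA : A.rank = d)
    {c : Fin n → ℝ} (hc : ∀ i, 0 < c i) :
    (Aᵀ * Matrix.diagonal c * A).PosDef := by
  refine .of_dotProduct_mulVec_pos (sandwich_herm A c) fun z hz => ?_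
  rw [star_trivial, quad_sandwich]
  have hAz : A *ᵥ z ≠ 0 := by
    intro h
    apply hz
    have hrn := LinearMap.finrank_range_add_finrank_ker A.mulVecLin
    have : Matrix.rank A + Module.finrank ℝ (LinearMap.ker A.mulVecLin)
        = Module.finrank ℝ (Fin d → ℝ) := hrn
    rw [hA, Module.finrank_pi] at this
    simp at this
    have hker : LinearMap.ker A.mulVecLin = ⊥ := this
    have hz' : z ∈ LinearMap.ker A.mulVecLin := by
      simpa [Matrix.mulVecLin] using h
    simpa [hker] using hz'
  obtain ⟨i, hi⟩ := Function.ne_iff.mp hAz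
  refine Finset.sum_pos' (fun j _ => mul_nonneg (hc j).le (sq_nonneg _)) ⟨i, Finset.mem_univ i, ?_⟩
  have h2 : (A *ᵥ z) i ≠ 0 := by simpa using hi
  exact mul_pos (hc i) (lt_of_le_of_ne (sq_nonneg _) (Ne.symm (pow_ne_zero 2 h2)))

lemma dot_mulVec_symm {M : Matrix (Fin d) (Fin d) ℝ} (hM : M.IsHermitian)
    (u w : Fin d → ℝ) : u ⬝ᵥ M *ᵥ w = w ⬝ᵥ M *ᵥ u := by
  have hMt : Mᵀ = M := by
    ext i j
    have := congrFun (congrFun hM i) j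
    simpa [Matrix.conjTranspose_apply] using this
  rw [Matrix.dotProduct_mulVec, ← Matrix.mulVec_transpose, hMt, dotProduct_comm]

lemma quad_inv_antitone {M N : Matrix (Fin d) (Fin d) ℝ} (hM : M.PosDef) (hN : N.PosDef)
    (hMN : (N - M).PosSemidef) (a : Fin d → ℝ) :
    a ⬝ᵥ N⁻¹ *ᵥ a ≤ a ⬝ᵥ M⁻¹ *ᵥ a := by
  set u := M⁻¹ *ᵥ a with hu
  set w := N⁻¹ *ᵥ a with hw
  have hMu : M *ᵥ u = a := by
    rw [hu, Matrix.mulVec_mulVec, Matrix.mul_nonsing_inv _ hM.det_pos.ne'.isUnit,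
      Matrix.one_mulVec]
  have hNw : N *ᵥ w = a := by
    rw [hw, Matrix.mulVec_mulVec, Matrix.mul_nonsing_inv _ hN.det_pos.ne'.isUnit,
      Matrix.one_mulVec]
  have h1 : 0 ≤ (w - u) ⬝ᵥ M *ᵥ (w - u) := by
    have := hM.posSemidef.dotProduct_mulVec_nonneg (w - u); rwa [star_trivial] at this
  have h2 : 0 ≤ w ⬝ᵥ (N - M) *ᵥ w := by
    have := hMN.dotProduct_mulVec_nonneg w; rwa [star_trivial] at this
  have e1 : w ⬝ᵥ M *ᵥ u = a ⬝ᵥ w := by rw [hMu]; exact dotProduct_comm w a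
  have e2 : u ⬝ᵥ M *ᵥ w = a ⬝ᵥ w := by
    rw [dot_mulVec_symm hM.isHermitian, hMu]; exact dotProduct_comm w a
  have e3 : u ⬝ᵥ M *ᵥ u = a ⬝ᵥ u := by rw [hMu]; exact dotProduct_comm u a
  have e4 : w ⬝ᵥ N *ᵥ w = a ⬝ᵥ w := by rw [hNw]; exact dotProduct_comm w a
  have expand1 : (w - u) ⬝ᵥ M *ᵥ (w - u)
      = w ⬝ᵥ M *ᵥ w - w ⬝ᵥ M *ᵥ u - u ⬝ᵥ M *ᵥ w + u ⬝ᵥ M *ᵥ u := by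
    rw [Matrix.mulVec_sub, sub_dotProduct, dotProduct_sub, dotProduct_sub]
    ring
  have expand2 : w ⬝ᵥ (N - M) *ᵥ w = w ⬝ᵥ N *ᵥ w - w ⬝ᵥ M *ᵥ w := by
    rw [Matrix.sub_mulVec, dotProduct_sub]
  rw [expand1, e1, e2, e3] at h1
  rw [expand2, e4] at h2
  show a ⬝ᵥ w ≤ a ⬝ᵥ u
  linarith

lemma smul_pd {M : Matrix (Fin d) (Fin d) ℝ} (hM : M.PosDef) {c : ℝ} (hc : 0 < c) :
    (c • M).PosDef := by
  refine .of_dotProduct_mulVec_pos ?_ fun z hz => ?_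
  · unfold Matrix.IsHermitian
    ext i j
    have := congrFun (congrFun hM.1 i) j
    simp only [Matrix.conjTranspose_apply, star_trivial] at this ⊢
    simp [this]
  · have := hM.dotProduct_mulVec_pos hz
    rw [star_trivial] at this ⊢
    rw [Matrix.smul_mulVec, dotProduct_smul, smul_eq_mul]
    exact mul_pos hc this

lemma quad_inv_le {M N : Matrix (Fin d) (Fin d) ℝ} (hM : M.PosDef) (hN : N.PosDef)
    {c : ℝ} (hc : 0 < c) (h : (c • N - M).PosSemidef) (a : Fin d → ℝ) :
    a ⬝ᵥ N⁻¹ *ᵥ a ≤ c * (a ⬝ᵥ M⁻¹ *ᵥ a) := by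
  have hcN : (c • N).PosDef := smul_pd hN hc
  have key := quad_inv_antitone hM hcN h a
  have hsm : (c • N)⁻¹ = c⁻¹ • N⁻¹ := by
    refine Matrix.inv_eq_right_inv ?_
    rw [Matrix.smul_mul, Matrix.mul_smul, smul_smul, mul_inv_cancel₀ hc.ne',
      Matrix.mul_nonsing_inv _ hN.det_pos.ne'.isUnit, one_smul]
  rw [hsm, Matrix.smul_mulVec, dotProduct_smul, smul_eq_mul] at key
  have := mul_le_mul_of_nonneg_left key hc.le
  rw [← mul_assoc, mul_inv_cancel₀ hc.ne', one_mul] at this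
  exact this

lemma sandwich_sub (A : Matrix (Fin n) (Fin d) ℝ) (v w : Fin n → ℝ) (c : ℝ) :
    c • (Aᵀ * Matrix.diagonal w * A) - Aᵀ * Matrix.diagonal v * A
      = Aᵀ * Matrix.diagonal (c • w - v) * A := by
  have : Matrix.diagonal (c • w - v) = c • Matrix.diagonal w - Matrix.diagonal v := by
    rw [← Matrix.diagonal_smul, Matrix.diagonal_sub]
    rfl
  rw [this, Matrix.mul_sub, Matrix.sub_mul, Matrix.mul_smul, Matrix.smul_mul]

lemma diag_entry (A : Matrix (Fin n) (Fin d) ℝ) (B : Matrix (Fin d) (Fin d) ℝ) (i : Fin n) :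
    (A * B * Aᵀ) i i = (fun j => A i j) ⬝ᵥ B *ᵥ (fun j => A i j) := by
  simp only [Matrix.mul_apply, Matrix.transpose_apply, Matrix.mulVec, dotProduct,
    Finset.sum_mul, Finset.mul_sum]
  rw [Finset.sum_comm]
  exact Finset.sum_congr rfl fun j _ => Finset.sum_congr rfl fun k _ => by ring

lemma main_half (A : Matrix (Fin n) (Fin d) ℝ) (hA : A.rank = d)
    (x y : Fin n → ℝ) (hx : ∀ i, 0 < x i) (hy : ∀ i, 0 < y i) (ε : ℝ)
    (h1 : ∀ i, x i ≤ Real.exp ε * y i) (h2 : ∀ i, y i ≤ Real.exp ε * x i) (i : Fin n) :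
    x i * (A * (Aᵀ * Matrix.diagonal x * A)⁻¹ * Aᵀ) i i
      ≤ Real.exp (2 * ε) * (y i * (A * (Aᵀ * Matrix.diagonal y * A)⁻¹ * Aᵀ) i i) := by
  set Mx := Aᵀ * Matrix.diagonal x * A with hMx
  set My := Aᵀ * Matrix.diagonal y * A with hMy
  have pdx : Mx.PosDef := sandwich_pd A hA hx
  have pdy : My.PosDef := sandwich_pd A hA hy
  set a : Fin d → ℝ := fun j => A i j with ha
  have hpsd : (Real.exp ε • Mx - My).PosSemidef := by
    rw [hMx, hMy, sandwich_sub]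
    refine sandwich_psd A fun j => ?_
    have := h2 j
    simp only [Pi.sub_apply, Pi.smul_apply, smul_eq_mul]
    linarith
  have hq : a ⬝ᵥ Mx⁻¹ *ᵥ a ≤ Real.exp ε * (a ⬝ᵥ My⁻¹ *ᵥ a) :=
    quad_inv_le pdy pdx (Real.exp_pos ε) hpsd a
  have hqx : 0 ≤ a ⬝ᵥ Mx⁻¹ *ᵥ a := by
    have := pdx.inv.posSemidef.dotProduct_mulVec_nonneg a; rwa [star_trivial] at this
  have hqy : 0 ≤ a ⬝ᵥ My⁻¹ *ᵥ a := by
    have := pdy.inv.posSemidef.dotProduct_mulVec_nonneg a; rwa [star_trivial] at this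
  rw [diag_entry, diag_entry]
  calc x i * (a ⬝ᵥ Mx⁻¹ *ᵥ a) ≤ (Real.exp ε * y i) * (a ⬝ᵥ Mx⁻¹ *ᵥ a) :=
        mul_le_mul_of_nonneg_right (h1 i) hqx
    _ ≤ (Real.exp ε * y i) * (Real.exp ε * (a ⬝ᵥ My⁻¹ *ᵥ a)) :=
        mul_le_mul_of_nonneg_left hq (mul_nonneg (Real.exp_pos ε).le (hy i).le)
    _ = Real.exp (2 * ε) * (y i * (a ⬝ᵥ My⁻¹ *ᵥ a)) := by
        rw [two_mul, Real.exp_add]; ring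

/-- Entrywise multiplicative stability of leverage scores. -/
theorem leverage_score_entrywise_stability {n d : ℕ} (A : Matrix (Fin n) (Fin d) ℝ)
    (hA : A.rank = d) (x y : Fin n → ℝ) (hx : ∀ i, 0 < x i) (hy : ∀ i, 0 < y i)
    (ε : ℝ) (hxy : ∀ i, |Real.log (x i) - Real.log (y i)| ≤ ε) :
    letI σ : (Fin n → ℝ) → Fin n → ℝ := fun v i =>
      v i * (A * (Aᵀ * Matrix.diagonal v * A)⁻¹ * Aᵀ) i i
    ∀ i, Real.exp (-2 * ε) * σ y i ≤ σ x i ∧ σ x i ≤ Real.exp (2 * ε) * σ y i := by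
  intro i
  dsimp only
  have h1 : ∀ j, x j ≤ Real.exp ε * y j := by
    intro j
    have h := (abs_le.mp (hxy j)).2
    have : Real.log (x j) ≤ ε + Real.log (y j) := by linarith
    calc x j = Real.exp (Real.log (x j)) := (Real.exp_log (hx j)).symm
      _ ≤ Real.exp (ε + Real.log (y j)) := Real.exp_le_exp.mpr this
      _ = Real.exp ε * y j := by rw [Real.exp_add, Real.exp_log (hy j)]
  have h2 : ∀ j, y j ≤ Real.exp ε * x j := by
    intro j
    have h := (abs_le.mp (hxy j)).1
    have : Real.log (y j) ≤ ε + Real.log (x j) := by linarith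
    calc y j = Real.exp (Real.log (y j)) := (Real.exp_log (hy j)).symm
      _ ≤ Real.exp (ε + Real.log (x j)) := Real.exp_le_exp.mpr this
      _ = Real.exp ε * x j := by rw [Real.exp_add, Real.exp_log (hx j)]
  constructor
  · have hub := main_half A hA y x hy hx ε h2 h1 i
    have hcancel : Real.exp (-2 * ε) * Real.exp (2 * ε) = 1 := by
      rw [← Real.exp_add]; ring_nf; exact Real.exp_zero
    calc Real.exp (-2 * ε) * (y i * (A * (Aᵀ * Matrix.diagonal y * A)⁻¹ * Aᵀ) i i)
        ≤ Real.exp (-2 * ε)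
            * (Real.exp (2 * ε) * (x i * (A * (Aᵀ * Matrix.diagonal x * A)⁻¹ * Aᵀ) i i)) :=
          mul_le_mul_of_nonneg_left hub (Real.exp_pos _).le
      _ = x i * (A * (Aᵀ * Matrix.diagonal x * A)⁻¹ * Aᵀ) i i := by
          rw [← mul_assoc, hcancel, one_mul]
  · exact main_half A hA x y hx hy ε h1 h2 i
end helpers2
end

section
/- Let J denote the Jacobian of the map ln z ↦ ln σ_A(z) at a point z ∈ R^n_{>0}, which equals Σ^{-1}(Σ − M) where Σ = diag(σ_A(z)) and M is the entrywise square of the projection P(z). Then for every u ∈ R^n, ‖J u‖_{σ_A(z)} ≤ ‖u‖_{σ_A(z)}, i.e. J is a contraction in the σ-norm. -/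
open Matrix Finset

lemma sum_swap4' {α : Type*} [Fintype α] (g : α → α → α → α → ℝ) :
    ∑ i, ∑ j, ∑ k, ∑ l, g i j k l = ∑ k, ∑ l, ∑ i, ∑ j, g i j k l :=
  calc ∑ i, ∑ j, ∑ k, ∑ l, g i j k l
      = ∑ i, ∑ k, ∑ j, ∑ l, g i j k l :=
        Finset.sum_congr rfl fun _ _ => Finset.sum_comm
    _ = ∑ k, ∑ i, ∑ j, ∑ l, g i j k l := Finset.sum_comm
    _ = ∑ k, ∑ i, ∑ l, ∑ j, g i j k l :=
        Finset.sum_congr rfl fun _ _ => Finset.sum_congr rfl fun _ _ => Finset.sum_comm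
    _ = ∑ k, ∑ l, ∑ i, ∑ j, g i j k l :=
        Finset.sum_congr rfl fun _ _ => Finset.sum_comm

lemma hadamard_quad_nonneg' {n : ℕ} (P Q : Matrix (Fin n) (Fin n) ℝ)
    (hP : ∀ i j, P i j = ∑ k, P i k * P j k)
    (hQ : ∀ i j, Q i j = ∑ k, Q i k * Q j k)
    (x : Fin n → ℝ) :
    0 ≤ ∑ i, ∑ j, x i * x j * (P i j * Q i j) := by
  have key : ∑ i, ∑ j, x i * x j * (P i j * Q i j)
      = ∑ k, ∑ l, (∑ i, x i * P i k * Q i l) ^ 2 := by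
    have e1 : ∀ k l : Fin n, (∑ i, x i * P i k * Q i l) ^ 2
        = ∑ i, ∑ j, (x i * P i k * Q i l) * (x j * P j k * Q j l) := by
      intro k l; rw [sq, Finset.sum_mul_sum]
    have e2 : ∀ i j : Fin n, x i * x j * (P i j * Q i j)
        = ∑ k, ∑ l, (x i * P i k * Q i l) * (x j * P j k * Q j l) := by
      intro i j
      rw [hP i j, hQ i j, Finset.sum_mul_sum, Finset.mul_sum]
      refine Finset.sum_congr rfl fun k _ => ?_
      rw [Finset.mul_sum]
      exact Finset.sum_congr rfl fun l _ => by ring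
    simp only [e1, e2]
    exact sum_swap4' _
  rw [key]
  positivity

lemma contraction_general {n : ℕ} (P : Matrix (Fin n) (Fin n) ℝ)
    (hPe : ∀ i j, P i j = ∑ k, P i k * P j k)
    (hCe : ∀ i j, (1 - P) i j = ∑ k, (1 - P) i k * (1 - P) j k)
    (hσ : ∀ i, 0 < P i i) (u : Fin n → ℝ) :
    Real.sqrt (∑ i, P i i *
        ((((Matrix.diagonal fun i => P i i)⁻¹ *
          ((Matrix.diagonal fun i => P i i) - (show Matrix (Fin n) (Fin n) ℝ from fun i j => P i j ^ 2))) *ᵥ u) i) ^ 2) ≤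
      Real.sqrt (∑ i, P i i * (u i) ^ 2) := by
  set σf : Fin n → ℝ := fun i => P i i with hσf
  set Bm : Matrix (Fin n) (Fin n) ℝ :=
    Matrix.diagonal σf - (show Matrix (Fin n) (Fin n) ℝ from fun i j => P i j ^ 2) with hBm
  set w : Fin n → ℝ := fun i => (σf i)⁻¹ * (Bm *ᵥ u) i with hw
  -- the Jacobian applied to u is w
  have hDinv : (Matrix.diagonal σf)⁻¹ = Matrix.diagonal (fun i => (σf i)⁻¹) := by
    apply Matrix.inv_eq_left_inv
    rw [Matrix.diagonal_mul_diagonal]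
    have : (fun i => (σf i)⁻¹ * σf i) = fun _ => (1 : ℝ) := by
      funext i; exact inv_mul_cancel₀ (hσ i).ne'
    rw [this, Matrix.diagonal_one]
  have hJw : ∀ i, (((Matrix.diagonal σf)⁻¹ * Bm) *ᵥ u) i = w i := by
    intro i
    rw [← Matrix.mulVec_mulVec, hDinv, Matrix.mulVec_diagonal]
  -- symmetry of P and Bm
  have hPsym : ∀ i j, P i j = P j i := by
    intro i j; rw [hPe i j, hPe j i]
    exact Finset.sum_congr rfl fun k _ => mul_comm _ _
  have hBapp : ∀ i j, Bm i j = Matrix.diagonal σf i j - P i j ^ 2 := fun i j => rfl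
  have hBmsym : ∀ i j, Bm i j = Bm j i := by
    intro i j
    simp only [hBapp, Matrix.sub_apply, Matrix.diagonal_apply]
    rw [hPsym i j]
    by_cases h : i = j
    · subst h; simp
    · simp [h, Ne.symm h]
  -- Bm entries as Hadamard product
  have hBme : ∀ i j, Bm i j = P i j * (1 - P) i j := by
    intro i j
    simp only [hBapp, Matrix.sub_apply, Matrix.diagonal_apply, Matrix.one_apply, hσf]
    by_cases h : i = j
    · subst h; simp; ring
    · simp [h]; ring
  -- quadratic form nonnegativity
  have hq_nonneg : ∀ x : Fin n → ℝ, 0 ≤ ∑ i, ∑ j, x i * x j * Bm i j := by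
    intro x
    have := hadamard_quad_nonneg' P (1 - P) hPe hCe x
    simp only [← hBme] at this
    exact this
  -- quadratic form dominated by diagonal
  have hdiag : ∀ x : Fin n → ℝ, ∑ i, ∑ j, x i * x j * Matrix.diagonal σf i j
      = ∑ i, σf i * x i ^ 2 := by
    intro x
    refine Finset.sum_congr rfl fun i _ => ?_
    rw [Finset.sum_eq_single_of_mem i (Finset.mem_univ i)]
    · rw [Matrix.diagonal_apply_eq]; ring
    · intro j _ hj
      rw [Matrix.diagonal_apply_ne _ (Ne.symm hj), mul_zero]
  have hqle : ∀ x : Fin n → ℝ, ∑ i, ∑ j, x i * x j * Bm i j ≤ ∑ i, σf i * x i ^ 2 := by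
    intro x
    have hM : 0 ≤ ∑ i, ∑ j, x i * x j * (P i j * P i j) :=
      hadamard_quad_nonneg' P P hPe hPe x
    have hsplit : ∑ i, ∑ j, x i * x j * Bm i j
        = ∑ i, σf i * x i ^ 2 - ∑ i, ∑ j, x i * x j * (P i j * P i j) := by
      rw [← hdiag x, ← Finset.sum_sub_distrib]
      refine Finset.sum_congr rfl fun i _ => ?_
      rw [← Finset.sum_sub_distrib]
      refine Finset.sum_congr rfl fun j _ => ?_
      simp only [hBapp, Matrix.sub_apply]
      ring
    rw [hsplit]; linarith
  -- s = bilinear pairing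
  have hmv : ∀ i, (Bm *ᵥ u) i = ∑ j, Bm i j * u j := by
    intro i; simp [Matrix.mulVec, dotProduct]
  have hs_eq : ∑ i, σf i * w i ^ 2 = ∑ i, ∑ j, w i * u j * Bm i j := by
    refine Finset.sum_congr rfl fun i _ => ?_
    have h1 : σf i * w i ^ 2 = w i * (σf i * w i) := by ring
    have h2 : σf i * w i = (Bm *ᵥ u) i := by
      rw [hw]; dsimp only
      rw [← mul_assoc, mul_inv_cancel₀ (hσ i).ne', one_mul]
    rw [h1, h2, hmv i, Finset.mul_sum]
    exact Finset.sum_congr rfl fun j _ => by ring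
  have hsym2 : ∑ i, ∑ j, u i * w j * Bm i j = ∑ i, ∑ j, w i * u j * Bm i j := by
    rw [Finset.sum_comm]
    exact Finset.sum_congr rfl fun j _ => Finset.sum_congr rfl fun i _ => by
      rw [hBmsym i j]; ring
  -- expansion of q(u - w)
  have hexp : ∑ i, ∑ j, (u i - w i) * (u j - w j) * Bm i j
      = ∑ i, ∑ j, u i * u j * Bm i j - ∑ i, ∑ j, u i * w j * Bm i j
        - ∑ i, ∑ j, w i * u j * Bm i j + ∑ i, ∑ j, w i * w j * Bm i j := by
    rw [← Finset.sum_sub_distrib, ← Finset.sum_sub_distrib, ← Finset.sum_add_distrib]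
    refine Finset.sum_congr rfl fun i _ => ?_
    rw [← Finset.sum_sub_distrib, ← Finset.sum_sub_distrib, ← Finset.sum_add_distrib]
    exact Finset.sum_congr rfl fun j _ => by ring
  have h0 : 0 ≤ ∑ i, ∑ j, (u i - w i) * (u j - w j) * Bm i j := hq_nonneg (fun i => u i - w i)
  have hqw : ∑ i, ∑ j, w i * w j * Bm i j ≤ ∑ i, σf i * w i ^ 2 := hqle w
  have hqu : ∑ i, ∑ j, u i * u j * Bm i j ≤ ∑ i, σf i * u i ^ 2 := hqle u
  have key : ∑ i, σf i * w i ^ 2 ≤ ∑ i, σf i * u i ^ 2 := by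
    rw [hexp] at h0
    rw [hsym2] at h0
    rw [← hs_eq] at h0
    linarith
  have hL : ∑ i, P i i *
      ((((Matrix.diagonal fun i => P i i)⁻¹ *
        ((Matrix.diagonal fun i => P i i) - (show Matrix (Fin n) (Fin n) ℝ from fun i j => P i j ^ 2))) *ᵥ u) i) ^ 2
      = ∑ i, σf i * w i ^ 2 := by
    refine Finset.sum_congr rfl fun i _ => ?_
    rw [show (((Matrix.diagonal fun i => P i i)⁻¹ *
        ((Matrix.diagonal fun i => P i i) - (show Matrix (Fin n) (Fin n) ℝ from fun i j => P i j ^ 2))) *ᵥ u) i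
      = (((Matrix.diagonal σf)⁻¹ * Bm) *ᵥ u) i from rfl, hJw i]
  rw [hL]
  exact Real.sqrt_le_sqrt key

/-- The Jacobian `J = Σ⁻¹(Σ − M)` of `ln z ↦ ln σ_A(z)` is a contraction in the
σ-norm. -/
theorem jacobian_contraction {n d : ℕ} (A : Matrix (Fin n) (Fin d) ℝ)
    (hA : A.rank = d) (hrows : ∀ i, (fun j => A i j) ≠ 0)
    (z : Fin n → ℝ) (hz : ∀ i, 0 < z i) :
    letI P : Matrix (Fin n) (Fin n) ℝ :=
      Matrix.diagonal (fun i => Real.sqrt (z i)) * A *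
        (Aᵀ * Matrix.diagonal z * A)⁻¹ * Aᵀ *
        Matrix.diagonal (fun i => Real.sqrt (z i))
    letI M : Matrix (Fin n) (Fin n) ℝ := fun i j => (P i j) ^ 2
    letI σ : Fin n → ℝ := fun i => P i i
    letI J : Matrix (Fin n) (Fin n) ℝ :=
      (Matrix.diagonal σ)⁻¹ * (Matrix.diagonal σ - M)
    ∀ u : Fin n → ℝ,
      Real.sqrt (∑ i, σ i * (J.mulVec u i) ^ 2) ≤
        Real.sqrt (∑ i, σ i * (u i) ^ 2) := by
  intro u
  set S : Matrix (Fin n) (Fin n) ℝ := Matrix.diagonal (fun i => Real.sqrt (z i)) with hS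
  set Pm : Matrix (Fin n) (Fin n) ℝ :=
    S * A * (Aᵀ * Matrix.diagonal z * A)⁻¹ * Aᵀ * S with hPm
  set B : Matrix (Fin n) (Fin d) ℝ := S * A with hB
  have hinj : ∀ x : Fin d → ℝ, A *ᵥ x = 0 → x = 0 := by
    intro x hx
    have h1 : LinearMap.ker A.mulVecLin = ⊥ := by
      have h2 := A.mulVecLin.finrank_range_add_finrank_ker
      rw [show Module.finrank ℝ (LinearMap.range A.mulVecLin) = d from hA] at h2
      simp only [Module.finrank_pi, Fintype.card_fin] at h2
      have : Module.finrank ℝ (LinearMap.ker A.mulVecLin) = 0 := by omega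
      exact Submodule.finrank_eq_zero.mp this
    have : x ∈ LinearMap.ker A.mulVecLin := by simpa [Matrix.mulVecLin_apply] using hx
    rw [h1] at this; simpa using this
  have hQpd : (Aᵀ * Matrix.diagonal z * A).PosDef := by
    apply Matrix.PosDef.of_dotProduct_mulVec_pos
    · show (Aᵀ * Matrix.diagonal z * A)ᴴ = _
      rw [conjTranspose_eq_transpose_of_trivial, Matrix.transpose_mul, Matrix.transpose_mul,
        Matrix.transpose_transpose, Matrix.diagonal_transpose, Matrix.mul_assoc]
    · intro x hx
      have hAx : A *ᵥ x ≠ 0 := fun h => hx (hinj x h)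
      have : star x ⬝ᵥ (Aᵀ * Matrix.diagonal z * A) *ᵥ x
          = ∑ i, z i * (A *ᵥ x) i ^ 2 := by
        rw [show (Aᵀ * Matrix.diagonal z * A) *ᵥ x = Aᵀ *ᵥ ((Matrix.diagonal z) *ᵥ (A *ᵥ x)) by
          simp [Matrix.mulVec_mulVec, Matrix.mul_assoc]]
        rw [Matrix.dotProduct_mulVec, Matrix.vecMul_transpose]
        simp [dotProduct, Matrix.mulVec_diagonal]
        exact Finset.sum_congr rfl fun i _ => by ring
      rw [this]
      obtain ⟨i, hi⟩ := Function.ne_iff.mp hAx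
      simp only [Pi.zero_apply] at hi
      exact Finset.sum_pos' (fun j _ => mul_nonneg (hz j).le (sq_nonneg _))
        ⟨i, Finset.mem_univ i, mul_pos (hz i) (sq_pos_of_ne_zero hi)⟩
  have hSsym : Sᵀ = S := by rw [hS, Matrix.diagonal_transpose]
  have hSS : S * S = Matrix.diagonal z := by
    rw [hS, Matrix.diagonal_mul_diagonal]
    exact congrArg Matrix.diagonal (funext fun i => Real.mul_self_sqrt (hz i).le)
  have hBt : Bᵀ = Aᵀ * S := by rw [hB, Matrix.transpose_mul, hSsym]
  have hBtB : Bᵀ * B = Aᵀ * Matrix.diagonal z * A := by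
    rw [hBt, hB, Matrix.mul_assoc Aᵀ, ← Matrix.mul_assoc S S A, hSS, ← Matrix.mul_assoc]
  have hQu : IsUnit (Bᵀ * B).det := by
    rw [hBtB]; exact isUnit_iff_ne_zero.mpr hQpd.det_pos.ne'
  haveI := (Bᵀ * B).invertibleOfIsUnitDet hQu
  have hPdef : Pm = B * (Bᵀ * B)⁻¹ * Bᵀ := by
    rw [hBtB, hBt, hPm, Matrix.mul_assoc]
  have hPP : Pm * Pm = Pm := by
    rw [hPdef]
    calc (B * (Bᵀ * B)⁻¹ * Bᵀ) * (B * (Bᵀ * B)⁻¹ * Bᵀ)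
        = B * ((Bᵀ * B)⁻¹ * ((Bᵀ * B) * ((Bᵀ * B)⁻¹ * Bᵀ))) := by
          simp only [Matrix.mul_assoc]
      _ = B * (Bᵀ * B)⁻¹ * Bᵀ := by
          rw [Matrix.inv_mul_cancel_left_of_invertible]
          exact (Matrix.mul_assoc _ _ _).symm
  have hPsym : Pmᵀ = Pm := by
    rw [hPdef]
    have hsym : (Bᵀ * B)ᵀ = Bᵀ * B := by rw [Matrix.transpose_mul, Matrix.transpose_transpose]
    simp only [Matrix.transpose_mul, Matrix.transpose_transpose, Matrix.transpose_nonsing_inv,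
      hsym, Matrix.mul_assoc]
  have hPe : ∀ i j, Pm i j = ∑ k, Pm i k * Pm j k := by
    intro i j
    conv_lhs => rw [← hPP]
    rw [show Pm * Pm = Pm * Pmᵀ by rw [hPsym], Matrix.mul_apply]
    exact Finset.sum_congr rfl fun k _ => by rw [Matrix.transpose_apply]
  have hCe : ∀ i j, (1 - Pm) i j = ∑ k, (1 - Pm) i k * (1 - Pm) j k := by
    have hCC : (1 - Pm) * (1 - Pm) = 1 - Pm := by
      rw [Matrix.mul_sub, Matrix.sub_mul, Matrix.sub_mul, hPP, Matrix.one_mul, Matrix.mul_one,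
        Matrix.one_mul]
      abel
    have hCsym : (1 - Pm)ᵀ = 1 - Pm := by
      rw [Matrix.transpose_sub, Matrix.transpose_one, hPsym]
    intro i j
    conv_lhs => rw [← hCC]
    rw [show (1 - Pm) * (1 - Pm) = (1 - Pm) * (1 - Pm)ᵀ by rw [hCsym], Matrix.mul_apply]
    exact Finset.sum_congr rfl fun k _ => by rw [Matrix.transpose_apply]
  have hσpos : ∀ i, 0 < Pm i i := by
    intro i
    have hQipd : (Bᵀ * B)⁻¹.PosDef := by
      rw [hBtB]; exact hQpd.inv
    have hbi : (fun k => B i k) ≠ 0 := by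
      intro h
      apply hrows i
      funext j
      have hj := congrFun h j
      simp only [Pi.zero_apply] at hj ⊢
      rw [hB, hS, Matrix.diagonal_mul] at hj
      have hs : Real.sqrt (z i) ≠ 0 := (Real.sqrt_pos.mpr (hz i)).ne'
      exact (mul_eq_zero.mp hj).resolve_left hs
    have hpos := hQipd.dotProduct_mulVec_pos hbi
    have heq : Pm i i = star (fun k => B i k) ⬝ᵥ (Bᵀ * B)⁻¹ *ᵥ (fun k => B i k) := by
      rw [hPdef, Matrix.mul_assoc, Matrix.mul_apply]
      simp only [Matrix.mul_apply, dotProduct, Matrix.mulVec, Matrix.transpose_apply,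
        star_trivial]
    rw [heq]; exact hpos
  exact contraction_general Pm hPe hCe hσpos u
end

section
/- Let M be positive definite and Q a symmetric-output linear solver matrix with ‖Qb − M^{-1}b‖²_M ≤ ε‖M^{-1}b‖²_M for all b, where ε ∈ [0, 0.1]. Then e^{−4√ε} M^{-1} ⪯ Qᵀ M Q ⪯ e^{4√ε} M^{-1}. -/
set_option maxHeartbeats 1000000

open Matrix

/-- Scalar inequality core. -/
private lemma scalar_bounds (ε s qx qy B : ℝ) (hε0 : 0 ≤ ε) (hε1 : ε ≤ 0.1)
    (hs : s = Real.sqrt ε) (hqx : 0 ≤ qx) (hqy : 0 ≤ qy)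
    (hCS : B ^ 2 ≤ qx * qy) (hq : qx - 2 * B + qy ≤ ε * qy) :
    Real.exp (-(4 * s)) * qy ≤ qx ∧ qx ≤ Real.exp (4 * s) * qy := by
  have hs0 : 0 ≤ s := hs ▸ Real.sqrt_nonneg ε
  have hs2 : s ^ 2 = ε := by rw [hs, Real.sq_sqrt hε0]
  have hsε : s ^ 2 ≤ 0.1 := by rw [hs2]; exact hε1
  have hs1 : s ≤ 1 := by nlinarith [sq_nonneg (s - 1)]
  set u := Real.sqrt qx with hu
  set v := Real.sqrt qy with hv
  have hu0 : 0 ≤ u := Real.sqrt_nonneg qx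
  have hv0 : 0 ≤ v := Real.sqrt_nonneg qy
  have hu2 : u ^ 2 = qx := Real.sq_sqrt hqx
  have hv2 : v ^ 2 = qy := Real.sq_sqrt hqy
  have hB : B ≤ u * v := by
    nlinarith [mul_nonneg hu0 hv0, sq_nonneg (B - u * v), sq_nonneg (B + u * v)]
  have hkey : (u - v) ^ 2 ≤ (s * v) ^ 2 := by nlinarith
  have hsv0 : 0 ≤ s * v := mul_nonneg hs0 hv0
  have hule : u ≤ v + s * v := by nlinarith
  have huge : v - s * v ≤ u := by nlinarith
  have hexp1 : 4 * s + 1 ≤ Real.exp (4 * s) := Real.add_one_le_exp _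
  have hexppos : 0 < Real.exp (4 * s) := Real.exp_pos _
  constructor
  · -- lower bound
    have h7 : 7 * s ≤ 2 + 4 * s ^ 2 := by nlinarith [sq_nonneg (7 - 20 * s)]
    have hone : 1 ≤ (1 - s) ^ 2 * Real.exp (4 * s) := by
      nlinarith [mul_nonneg (sq_nonneg (1 - s)) (sub_nonneg.mpr hexp1),
        mul_nonneg hs0 (sub_nonneg.mpr h7)]
    have hle : Real.exp (-(4 * s)) ≤ (1 - s) ^ 2 := by
      rw [Real.exp_neg, inv_le_iff_one_le_mul₀ hexppos]
      linarith [hone]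
    have ha : 0 ≤ u - (1 - s) * v := by nlinarith
    have hb : 0 ≤ u + (1 - s) * v := by nlinarith [mul_nonneg (by linarith : (0:ℝ) ≤ 1 - s) hv0]
    have hab := mul_nonneg ha hb
    have hlow : (1 - s) ^ 2 * qy ≤ qx := by nlinarith [hab]
    calc Real.exp (-(4 * s)) * qy ≤ (1 - s) ^ 2 * qy :=
          mul_le_mul_of_nonneg_right hle hqy
      _ ≤ qx := hlow
  · -- upper bound
    have h2 : (1 + s) ^ 2 ≤ Real.exp (4 * s) := by
      have h3 : (1 + s) ^ 2 ≤ Real.exp s ^ 2 := by nlinarith [Real.exp_pos s, Real.add_one_le_exp s]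
      have h4 : Real.exp s ^ 2 = Real.exp (2 * s) := by
        rw [← Real.exp_nat_mul]; norm_num
      have h5 : Real.exp (2 * s) ≤ Real.exp (4 * s) := Real.exp_le_exp.mpr (by linarith)
      calc (1 + s) ^ 2 ≤ Real.exp s ^ 2 := h3
        _ = Real.exp (2 * s) := h4
        _ ≤ Real.exp (4 * s) := h5
    have hmm := mul_self_le_mul_self hu0 hule
    have h6 : (1 + s) ^ 2 * qy ≤ Real.exp (4 * s) * qy :=
      mul_le_mul_of_nonneg_right h2 hqy
    nlinarith [hmm, h6]

/-- A linear solver with relative error ε yields a spectral approximation of the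
inverse: `e^{-4√ε} M⁻¹ ⪯ Qᵀ M Q ⪯ e^{4√ε} M⁻¹`. -/
theorem solver_implies_spectral_approx {d : ℕ} (M Q : Matrix (Fin d) (Fin d) ℝ)
    (hM : M.PosDef) (ε : ℝ) (hε0 : 0 ≤ ε) (hε1 : ε ≤ 0.1)
    (hQ : ∀ b : Fin d → ℝ,
      (Q.mulVec b - M⁻¹.mulVec b) ⬝ᵥ M.mulVec (Q.mulVec b - M⁻¹.mulVec b) ≤
        ε * (M⁻¹.mulVec b ⬝ᵥ M.mulVec (M⁻¹.mulVec b))) :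
    (Qᵀ * M * Q - Real.exp (-(4 * Real.sqrt ε)) • M⁻¹).PosSemidef ∧
      (Real.exp (4 * Real.sqrt ε) • M⁻¹ - Qᵀ * M * Q).PosSemidef := by
  have hMt : Mᵀ = M := by
    have := hM.isHermitian
    rwa [Matrix.IsHermitian, conjTranspose_eq_transpose_of_trivial] at this
  -- symmetry of the bilinear form
  have hsym : ∀ x y : Fin d → ℝ, x ⬝ᵥ M *ᵥ y = y ⬝ᵥ M *ᵥ x := by
    intro x y
    rw [dotProduct_mulVec, ← mulVec_transpose, hMt, dotProduct_comm]
  have hnonneg : ∀ x : Fin d → ℝ, 0 ≤ x ⬝ᵥ M *ᵥ x := fun x => by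
    simpa using hM.posSemidef.dotProduct_mulVec_nonneg x
  -- Cauchy–Schwarz for the M-inner product
  have hCS : ∀ x y : Fin d → ℝ, (x ⬝ᵥ M *ᵥ y) ^ 2 ≤ (x ⬝ᵥ M *ᵥ x) * (y ⬝ᵥ M *ᵥ y) := by
    intro x y
    set qx := x ⬝ᵥ M *ᵥ x
    set qy := y ⬝ᵥ M *ᵥ y
    set B := x ⬝ᵥ M *ᵥ y with hB
    have hkey : ∀ t : ℝ, 0 ≤ qx + 2 * t * B + t ^ 2 * qy := by
      intro t
      have h := hnonneg (x + t • y)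
      have hexp : (x + t • y) ⬝ᵥ M *ᵥ (x + t • y) = qx + 2 * t * B + t ^ 2 * qy := by
        have hyx := hsym y x
        simp only [mulVec_add, mulVec_smul, add_dotProduct, dotProduct_add,
          dotProduct_smul, smul_dotProduct, smul_eq_mul]
        rw [hyx]
        ring
      rw [hexp] at h
      exact h
    rcases eq_or_lt_of_le (hnonneg y) with hqy0 | hqy0
    · -- qy = 0, then B = 0
      have hqy : qy = 0 := hqy0.symm
      have hB0 : B = 0 := by
        by_contra hB0
        have h := hkey (-(qx + 1) / (2 * B))
        rw [hqy] at h
        have e : 2 * (-(qx + 1) / (2 * B)) * B = -(qx + 1) := by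
          field_simp
        rw [mul_zero, add_zero, e] at h
        linarith
      rw [hB0, hqy]
      simp
    · have hqy : 0 < qy := hqy0
      have h := hkey (-(B / qy))
      have hqy' : qy ≠ 0 := ne_of_gt hqy
      have hdiv : 0 ≤ qx - B ^ 2 / qy := by
        have : 2 * (-(B / qy)) * B + (-(B / qy)) ^ 2 * qy = -(B ^ 2 / qy) := by
          field_simp; ring
        linarith [h, this]
      have := (div_le_iff₀ hqy).mp (by linarith : B ^ 2 / qy ≤ qx)
      linarith
  have hdet : IsUnit M.det := hM.det_pos.ne'.isUnit
  have hMMinv : M * M⁻¹ = 1 := mul_nonsing_inv M hdet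
  -- pointwise quadratic-form bounds
  have hpoint : ∀ b : Fin d → ℝ,
      Real.exp (-(4 * Real.sqrt ε)) * (b ⬝ᵥ M⁻¹ *ᵥ b) ≤ b ⬝ᵥ (Qᵀ * M * Q) *ᵥ b ∧
        b ⬝ᵥ (Qᵀ * M * Q) *ᵥ b ≤ Real.exp (4 * Real.sqrt ε) * (b ⬝ᵥ M⁻¹ *ᵥ b) := by
    intro b
    set x := Q *ᵥ b with hx
    set y := M⁻¹ *ᵥ b with hy
    have hMy : M *ᵥ y = b := by
      rw [hy, mulVec_mulVec, hMMinv, one_mulVec]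
    have hQform : b ⬝ᵥ (Qᵀ * M * Q) *ᵥ b = x ⬝ᵥ M *ᵥ x := by
      rw [← mulVec_mulVec, ← mulVec_mulVec, dotProduct_mulVec (R := ℝ) b Qᵀ,
        vecMul_transpose, hx]
    have hMform : b ⬝ᵥ M⁻¹ *ᵥ b = y ⬝ᵥ M *ᵥ y := by
      conv_lhs => rw [← hMy]
      rw [hsym, hMy, ← hy]
      exact dotProduct_comm b y
    have hq := hQ b
    have hexp : (x - y) ⬝ᵥ M *ᵥ (x - y) =
        (x ⬝ᵥ M *ᵥ x) - 2 * (x ⬝ᵥ M *ᵥ y) + (y ⬝ᵥ M *ᵥ y) := by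
      rw [mulVec_sub, sub_dotProduct, dotProduct_sub, dotProduct_sub]
      linarith [hsym y x]
    rw [hexp] at hq
    have := scalar_bounds ε (Real.sqrt ε) (x ⬝ᵥ M *ᵥ x) (y ⬝ᵥ M *ᵥ y) (x ⬝ᵥ M *ᵥ y)
      hε0 hε1 rfl (hnonneg x) (hnonneg y) (hCS x y) (by linarith [hq])
    rw [hQform, hMform]
    exact ⟨this.1, this.2⟩
  -- Hermitian-ness
  have hQMQ : (Qᵀ * M * Q).IsHermitian := by
    have := isHermitian_conjTranspose_mul_mul Q hM.isHermitian
    rwa [conjTranspose_eq_transpose_of_trivial] at this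
  have hMinvH : (M⁻¹).IsHermitian := hM.inv.isHermitian
  have hsmulH : ∀ c : ℝ, (c • M⁻¹).IsHermitian := fun c => by
    rw [Matrix.IsHermitian, conjTranspose_smul, hMinvH.eq]
    simp
  refine ⟨posSemidef_iff_dotProduct_mulVec.mpr ⟨hQMQ.sub (hsmulH _), fun z => ?_⟩, posSemidef_iff_dotProduct_mulVec.mpr ⟨(hsmulH _).sub hQMQ, fun z => ?_⟩⟩
  · have h := (hpoint z).1
    simp only [star_trivial, sub_mulVec, dotProduct_sub, smul_mulVec,
      dotProduct_smul, smul_eq_mul]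
    linarith [h]
  · have h := (hpoint z).2
    simp only [star_trivial, sub_mulVec, dotProduct_sub, smul_mulVec,
      dotProduct_smul, smul_eq_mul]
    linarith [h]
end
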